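/- Let f : M → M be a diffeomorphism of a compact surface, Λ a compact hyperbolic invariant set with Ω(f|_Λ) = Λ, and suppose Λ_1 (the union of nontrivial connected components of Λ) is a disjoint union of an attractor Λ_1^s and a repeller Λ_1^u. Then Λ_0 = Λ \ Λ_1 is compact, i.e., no sequence in Λ_0 can accumulate on Λ_1. -/

import Mathlib

open Function Set
open scoped Manifold

variable {E : Type*} [NormedAddCommGroup E] [NormedSpace ℝ E]
  {H : Type*} [TopologicalSpace H]
  {M : Type*} [MetricSpace M] [ChartedSpace H M]

/-- Iteration indexed by `ℤ`, using a map and its inverse. -/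
def zIter (f finv : M → M) : ℤ → M → M
  | Int.ofNat n => f^[n]
  | Int.negSucc n => finv^[n + 1]

/-- Local stable set of size `ε`. -/
def localStable (f : M → M) (ε : ℝ) (x : M) : Set M :=
  {y | ∀ n : ℕ, dist (f^[n] x) (f^[n] y) < ε}

/-- Local unstable set of size `ε` (via the inverse map). -/
def localUnstable (finv : M → M) (ε : ℝ) (x : M) : Set M :=
  {y | ∀ n : ℕ, dist (finv^[n] x) (finv^[n] y) < ε}

/-- Global stable manifold of `x`. -/
def globalStable (f : M → M) (x : M) : Set M :=
  {y | Filter.Tendsto (fun n : ℕ => dist (f^[n] x) (f^[n] y)) Filter.atTop (nhds 0)}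

/-- Global unstable manifold of `x` (via the inverse map). -/
def globalUnstable (finv : M → M) (x : M) : Set M :=
  {y | Filter.Tendsto (fun n : ℕ => dist (finv^[n] x) (finv^[n] y)) Filter.atTop (nhds 0)}

/-- A set `Λ` has local product structure: nearby points of `Λ` have the
(unique) intersection of their local stable/unstable sets inside `Λ`. -/
def LocalProductStructure (f finv : M → M) (Λ : Set M) : Prop :=
  ∃ ε > (0 : ℝ), ∃ δ > (0 : ℝ), ∀ x ∈ Λ, ∀ y ∈ Λ, dist x y < δ →
    localStable f ε x ∩ localUnstable finv ε y ⊆ Λ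

/-- A set `Λ` is locally maximal (isolated) for `f`. -/
def IsLocallyMaximal (f finv : M → M) (Λ : Set M) : Prop :=
  ∃ V : Set M, IsOpen V ∧ Λ ⊆ V ∧ Λ = ⋂ n : ℤ, zIter f finv n '' V

/-- `Λ` is a compact invariant hyperbolic set for `f`: the tangent bundle over `Λ`
splits into a `Df`-invariant contracting and expanding directions. -/
def IsHyperbolicSet (I : ModelWithCorners ℝ E H) (f : M → M) (Λ : Set M) : Prop :=
  IsCompact Λ ∧ f '' Λ = Λ ∧
  ∃ (Es Eu : ∀ x : M, Submodule ℝ (TangentSpace I x)) (C lam : ℝ),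
    0 < C ∧ 0 < lam ∧ lam < 1 ∧
    (∀ x ∈ Λ, IsCompl (Es x) (Eu x)) ∧
    (∀ x ∈ Λ, (Es x).map (mfderiv I I f x : TangentSpace I x →ₗ[ℝ] TangentSpace I (f x))
        ≤ Es (f x)) ∧
    (∀ x ∈ Λ, (Eu x).map (mfderiv I I f x : TangentSpace I x →ₗ[ℝ] TangentSpace I (f x))
        ≤ Eu (f x)) ∧
    (∀ x ∈ Λ, ∀ n : ℕ, ∀ v ∈ Es x, @Norm.norm E _ (mfderiv I I f^[n] x v) ≤ C * lam ^ n * @Norm.norm E _ v) ∧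
    (∀ x ∈ Λ, ∀ n : ℕ, ∀ v ∈ Eu x, @Norm.norm E _ v ≤ C * lam ^ n * @Norm.norm E _ (mfderiv I I f^[n] x v))

/-- Every point of `Λ` is nonwandering for `f` restricted to `Λ`. -/
def NonwanderingOnRestriction (f : M → M) (Λ : Set M) : Prop :=
  ∀ x ∈ Λ, ∀ U : Set M, IsOpen U → x ∈ U →
    ∃ n : ℕ, 0 < n ∧ (f^[n] '' (U ∩ Λ) ∩ (U ∩ Λ)).Nonempty

/-- The set of points of `Λ` whose connected component in `Λ` is a singleton. -/
def singletonPart (Λ : Set M) : Set M :=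
  {x ∈ Λ | connectedComponentIn Λ x = {x}}

/-- The union of the nontrivial connected components of `Λ`. -/
def nontrivialPart (Λ : Set M) : Set M :=
  Λ \ singletonPart Λ

/-- The points of `S` whose global unstable manifold is contained in `S`. -/
def unstableSaturatedPart (finv : M → M) (S : Set M) : Set M :=
  {x ∈ S | globalUnstable finv x ⊆ S}

/-- The points of `S` whose global stable manifold is contained in `S`. -/
def stableSaturatedPart (f : M → M) (S : Set M) : Set M :=
  {x ∈ S | globalStable f x ⊆ S}

/-- Nonwandering points have returns of arbitrarily large times. -/
lemma exists_large_return {X : Type*} [MetricSpace X] {f : X → X}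
    (hcf : Continuous f) {Λ : Set X} (hnw : NonwanderingOnRestriction f Λ)
    {x : X} (hx : x ∈ Λ) {B : Set X} (hB : IsOpen B) (hxB : x ∈ B) :
    ∀ N : ℕ, ∃ m ≥ N, ∃ z ∈ B ∩ Λ, f^[m] z ∈ B := by
  intro N
  induction N with
  | zero => exact ⟨0, le_refl 0, x, ⟨hxB, hx⟩, hxB⟩
  | succ N ih =>
    obtain ⟨m, hm, z, ⟨hzB, hzΛ⟩, hfz⟩ := ih
    have hV : IsOpen (B ∩ f^[m] ⁻¹' B) := hB.inter ((hcf.iterate m).isOpen_preimage B hB)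
    obtain ⟨k, hk, p, hp1, hp2⟩ := hnw z hzΛ _ hV ⟨hzB, hfz⟩
    obtain ⟨q, hq, rfl⟩ := hp1
    refine ⟨m + k, by omega, q, ⟨hq.1.1, hq.2⟩, ?_⟩
    rw [Function.iterate_add_apply]
    exact hp2.1.2

/-- Forward invariance of an open set with `f '' closure U ⊆ U`. -/
lemma iterate_mem_of_image_closure_subset {X : Type*} [TopologicalSpace X] {f : X → X}
    {U : Set X} (hUf : f '' closure U ⊆ U) : ∀ k, ∀ y ∈ U, f^[k] y ∈ U := by
  intro k
  induction k with
  | zero => intro y hy; exact hy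
  | succ k ih =>
    intro y hy
    rw [Function.iterate_succ_apply']
    exact hUf ⟨f^[k] y, subset_closure (ih y hy), rfl⟩

/-- A nonwandering point in the basin neighborhood of an attractor lies in the attractor. -/
lemma mem_attractor_of_nonwandering {X : Type*} [MetricSpace X] {f finv : X → X}
    (hcf : Continuous f) (hcfinv : Continuous finv)
    (h2 : Function.RightInverse finv f)
    {Λ U : Set X} (hnw : NonwanderingOnRestriction f Λ)
    (hUo : IsOpen U) (hUf : f '' closure U ⊆ U)
    {x : X} (hx : x ∈ Λ) (hxU : x ∈ U)
    (h1 : Function.LeftInverse finv f) : ∀ n : ℕ, x ∈ f^[n] '' U := by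
  have hcl : ∀ n : ℕ, finv^[n] x ∈ closure U := by
    intro n
    have hx_cl : x ∈ closure (finv^[n] ⁻¹' U) := by
      rw [Metric.mem_closure_iff]
      intro ε hε
      obtain ⟨m, hm, z, ⟨⟨hzU, -⟩, -⟩, hfzU, hfzb⟩ :=
        exists_large_return hcf hnw hx (hUo.inter Metric.isOpen_ball)
          ⟨hxU, Metric.mem_ball_self hε⟩ n
      refine ⟨f^[m] z, ?_, by rw [dist_comm]; exact hfzb⟩
      have hdecomp : f^[m] z = f^[n] (f^[m - n] z) := by
        rw [← Function.iterate_add_apply]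
        congr 1
        omega
      show finv^[n] (f^[m] z) ∈ U
      rw [hdecomp, h1.iterate n (f^[m - n] z)]
      exact iterate_mem_of_image_closure_subset hUf (m - n) z hzU
    exact (hcfinv.iterate n).closure_preimage_subset U hx_cl
  have hU : ∀ n : ℕ, finv^[n] x ∈ U := by
    intro n
    have heq : finv^[n] x = f (finv^[n + 1] x) := by
      rw [Function.iterate_succ_apply', h2 (finv^[n] x)]
    rw [heq]
    exact hUf ⟨finv^[n + 1] x, hcl (n + 1), rfl⟩
  intro n
  exact ⟨finv^[n] x, hU n, h2.iterate n x⟩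

/-- A nonwandering point in the basin neighborhood of a repeller lies in the repeller. -/
lemma mem_repeller_of_nonwandering {X : Type*} [MetricSpace X] {f finv : X → X}
    (hcf : Continuous f)
    (h1 : Function.LeftInverse finv f)
    {Λ U : Set X} (hnw : NonwanderingOnRestriction f Λ)
    (hUo : IsOpen U) (hUf : finv '' closure U ⊆ U)
    {x : X} (hx : x ∈ Λ) (hxU : x ∈ U) : ∀ n : ℕ, x ∈ finv^[n] '' U := by
  have hcl : ∀ n : ℕ, f^[n] x ∈ closure U := by
    intro n
    have hx_cl : x ∈ closure (f^[n] ⁻¹' U) := by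
      rw [Metric.mem_closure_iff]
      intro ε hε
      obtain ⟨m, hm, z, ⟨⟨hzU, hzb⟩, -⟩, hfzU, -⟩ :=
        exists_large_return hcf hnw hx (hUo.inter Metric.isOpen_ball)
          ⟨hxU, Metric.mem_ball_self hε⟩ n
      refine ⟨z, ?_, by rw [dist_comm]; exact hzb⟩
      have hdecomp : f^[m] z = f^[m - n] (f^[n] z) := by
        rw [← Function.iterate_add_apply]
        congr 1
        omega
      show f^[n] z ∈ U
      have : finv^[m - n] (f^[m] z) = f^[n] z := by
        rw [hdecomp, h1.iterate (m - n) (f^[n] z)]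
      rw [← this]
      exact iterate_mem_of_image_closure_subset hUf (m - n) _ hfzU
    exact (hcf.iterate n).closure_preimage_subset U hx_cl
  have hU : ∀ n : ℕ, f^[n] x ∈ U := by
    intro n
    have heq : f^[n] x = finv (f^[n + 1] x) := by
      rw [Function.iterate_succ_apply', h1 (f^[n] x)]
    rw [heq]
    exact hUf ⟨f^[n + 1] x, hcl (n + 1), rfl⟩
  intro n
  exact ⟨f^[n] x, hU n, h1.iterate n x⟩

/-- (part of Lemma 6.9) If `Λ₁` is the disjoint union of an attractor
`Λ₁ˢ` and a repeller `Λ₁ᵘ`, then `Λ₀ = Λ \ Λ₁` is compact: no sequence in `Λ₀`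
accumulates on `Λ₁`. -/
theorem singletonPart_compact
    {M : Type*} [MetricSpace M] [ChartedSpace (EuclideanSpace ℝ (Fin 2)) M]
    [IsManifold (𝓡 2) (⊤ : ℕ∞) M] [CompactSpace M]
    (f finv : M → M) (hf : ContMDiff (𝓡 2) (𝓡 2) (⊤ : ℕ∞) f)
    (hfinv : ContMDiff (𝓡 2) (𝓡 2) (⊤ : ℕ∞) finv)
    (h1 : Function.LeftInverse finv f) (h2 : Function.RightInverse finv f)
    (Λ : Set M) (hΛ : IsHyperbolicSet (𝓡 2) f Λ)
    (hnw : NonwanderingOnRestriction f Λ)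
    (Λ₁ Λs Λu : Set M) (hΛ₁ : Λ₁ = nontrivialPart Λ)
    (hunion : Λ₁ = Λs ∪ Λu) (hdisj : Λs ∩ Λu = ∅)
    (hatt : ∃ U : Set M, IsOpen U ∧ Λs ⊆ U ∧ f '' closure U ⊆ U ∧
      Λs = ⋂ n : ℕ, f^[n] '' U)
    (hrep : ∃ U : Set M, IsOpen U ∧ Λu ⊆ U ∧ finv '' closure U ⊆ U ∧
      Λu = ⋂ n : ℕ, finv^[n] '' U) :
    IsCompact (Λ \ Λ₁) := by
  obtain ⟨U, hUo, hΛsU, hUf, hΛs⟩ := hatt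
  obtain ⟨U', hU'o, hΛuU, hU'f, hΛu⟩ := hrep
  have hcf : Continuous f := hf.continuous
  have hcfinv : Continuous finv := hfinv.continuous
  have hkey : Λ₁ = Λ ∩ (U ∪ U') := by
    apply Set.Subset.antisymm
    · intro x hx
      refine ⟨by rw [hΛ₁] at hx; exact hx.1, ?_⟩
      rw [hunion] at hx
      rcases hx with hx | hx
      · exact Or.inl (hΛsU hx)
      · exact Or.inr (hΛuU hx)
    · rintro x ⟨hxΛ, hxU | hxU'⟩
      · rw [hunion]
        left
        rw [hΛs]
        exact Set.mem_iInter.2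
          (mem_attractor_of_nonwandering hcf hcfinv h2 hnw hUo hUf hxΛ hxU h1)
      · rw [hunion]
        right
        rw [hΛu]
        exact Set.mem_iInter.2
          (mem_repeller_of_nonwandering hcf h1 hnw hU'o hU'f hxΛ hxU')
  have : Λ \ Λ₁ = Λ \ (U ∪ U') := by
    rw [hkey, Set.diff_self_inter]
  rw [this]
  exact hΛ.1.diff (hUo.union hU'o)
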